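/- Let ψ : ℝ → EuclideanSpace ℝ (Fin n) be continuous, ρ > 0, t_c > 0, δ > 0, and suppose the matrix (∫₀^{t_c} vecMulVec (ψ(s)) (ψ(s)) ds) − δ • 1 is positive semidefinite (ψ is interval exciting on [0, t_c] with level δ). If Φ : ℝ → Matrix (Fin n) (Fin n) ℝ is differentiable with Φ'(t) = −ρ • Φ(t) + vecMulVec (ψ(t)) (ψ(t)) for all t ≥ 0 and Φ(0) = 0, then Φ(t_c) − (δ * Real.exp(−ρ t_c)) • 1 is positive semidefinite. -/

import Mathlib

open Matrix
open scoped RealInnerProductSpace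

attribute [local instance] Matrix.normedAddCommGroup Matrix.normedSpace

/-- The underlying plain vector of a point of `EuclideanSpace ℝ (Fin n)`. -/
def ev {n : ℕ} (x : EuclideanSpace ℝ (Fin n)) : Fin n → ℝ :=
  (WithLp.equiv 2 (Fin n → ℝ)) x

lemma ev_cont {n : ℕ} : Continuous (ev (n := n)) := by
  unfold ev; exact PiLp.continuous_ofLp 2 _

lemma key {n : ℕ} (ψ : ℝ → EuclideanSpace ℝ (Fin n)) (hψ : Continuous ψ)
    (ρ tc : ℝ) (htc : 0 < tc)
    (Φ : ℝ → Matrix (Fin n) (Fin n) ℝ) (hΦ : Differentiable ℝ Φ)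
    (hΦd : ∀ t ≥ (0:ℝ), deriv Φ t = (-ρ) • Φ t + vecMulVec (ev (ψ t)) (ev (ψ t)))
    (hΦ0 : Φ 0 = 0) (L : Matrix (Fin n) (Fin n) ℝ →L[ℝ] ℝ) :
    Real.exp (ρ * tc) * L (Φ tc) =
      ∫ s in (0:ℝ)..tc, Real.exp (ρ * s) * L (vecMulVec (ev (ψ s)) (ev (ψ s))) := by
  have hcont : Continuous fun s => Real.exp (ρ * s) * L (vecMulVec (ev (ψ s)) (ev (ψ s))) := by
    exact ((Real.continuous_exp.comp (continuous_const.mul continuous_id)).mul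
      (L.continuous.comp (((ev_cont.comp hψ)).matrix_vecMulVec (ev_cont.comp hψ))))
  have hderiv : ∀ t ∈ Set.uIcc (0:ℝ) tc,
      HasDerivAt (fun t => Real.exp (ρ * t) * L (Φ t))
        (Real.exp (ρ * t) * L (vecMulVec (ev (ψ t)) (ev (ψ t)))) t := by
    intro t ht
    have ht0 : 0 ≤ t := by
      rw [Set.uIcc_of_le htc.le] at ht; exact ht.1
    have h1 : HasDerivAt (fun t => Real.exp (ρ * t)) (ρ * Real.exp (ρ * t)) t := by
      have := (Real.hasDerivAt_exp (ρ * t)).comp t ((hasDerivAt_id t).const_mul ρ)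
      simpa [mul_comm] using ((hasDerivAt_id t).const_mul ρ).exp
    have h2 : HasDerivAt (fun t => L (Φ t)) (L (deriv Φ t)) t :=
      L.hasFDerivAt.comp_hasDerivAt t (hΦ t).hasDerivAt
    have := h1.mul h2
    refine this.congr_deriv ?_
    rw [hΦd t ht0, map_add, L.map_smul]
    simp only [smul_eq_mul]
    ring
  have := intervalIntegral.integral_eq_sub_of_hasDerivAt hderiv
    (hcont.intervalIntegrable 0 tc)
  rw [this, hΦ0, map_zero, mul_zero, sub_zero]

/-- Excitation transfer (proof of Proposition 5): interval excitation of `ψ`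
on `[0, t_c]` with level `δ` gives `Φ(t_c) ⪰ δ e^{−ρ t_c} I` for the
Kreisselmeier filter `Φ̇ = −ρΦ + ψψᵀ`, `Φ(0) = 0`. -/
theorem stmt17 {n : ℕ} (ψ : ℝ → EuclideanSpace ℝ (Fin n)) (hψ : Continuous ψ)
    (ρ tc δ : ℝ) (hρ : 0 < ρ) (htc : 0 < tc) (hδ : 0 < δ)
    (hIE : ((∫ s in (0:ℝ)..tc, vecMulVec (ev (ψ s)) (ev (ψ s))) -
      δ • (1 : Matrix (Fin n) (Fin n) ℝ)).PosSemidef)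
    (Φ : ℝ → Matrix (Fin n) (Fin n) ℝ) (hΦ : Differentiable ℝ Φ)
    (hΦd : ∀ t ≥ (0:ℝ), deriv Φ t = (-ρ) • Φ t + vecMulVec (ev (ψ t)) (ev (ψ t)))
    (hΦ0 : Φ 0 = 0) :
    (Φ tc - (δ * Real.exp (-ρ * tc)) • (1 : Matrix (Fin n) (Fin n) ℝ)).PosSemidef := by
  have hVM : Continuous fun s => vecMulVec (ev (ψ s)) (ev (ψ s)) :=
    (ev_cont.comp hψ).matrix_vecMulVec (ev_cont.comp hψ)
  -- quadratic form identity
  have hquad : ∀ (u x : Fin n → ℝ), x ⬝ᵥ (vecMulVec u u *ᵥ x) = (u ⬝ᵥ x)^2 := by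
    intro u x
    simp [mulVec, vecMulVec, dotProduct, Finset.mul_sum, Finset.sum_mul, pow_two,
      Finset.sum_mul_sum]
    rw [Finset.sum_comm]
    congr 1; ext i; congr 1; ext j; ring
  refine Matrix.PosSemidef.of_dotProduct_mulVec_nonneg ?_ ?_
  · -- Hermitian
    have hsym : ∀ i j, Φ tc i j = Φ tc j i := by
      intro i j
      classical
      let L : Matrix (Fin n) (Fin n) ℝ →ₗ[ℝ] ℝ :=
        { toFun := fun M => M i j - M j i
          map_add' := by intros; simp; ring
          map_smul' := by intros; simp [mul_sub] }
      have hk := key ψ hψ ρ tc htc Φ hΦ hΦd hΦ0 L.toContinuousLinearMap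
      have hz : ∀ s : ℝ, L.toContinuousLinearMap (vecMulVec (ev (ψ s)) (ev (ψ s))) = 0 := by
        intro s; simp [L, vecMulVec, mul_comm]
      simp only [hz, mul_zero, intervalIntegral.integral_zero] at hk
      have : L.toContinuousLinearMap (Φ tc) = 0 := by
        have he := Real.exp_pos (ρ * tc)
        exact (mul_eq_zero.mp hk).resolve_left (by positivity)
      simpa [L, sub_eq_zero] using this
    ext i j
    simp only [Matrix.sub_apply, Matrix.conjTranspose_apply, Matrix.smul_apply, Matrix.one_apply,
      star_trivial]
    rw [hsym j i]
    by_cases h : i = j <;> simp [h, eq_comm]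
  · intro x
    classical
    let L : Matrix (Fin n) (Fin n) ℝ →ₗ[ℝ] ℝ :=
      { toFun := fun M => (star x) ⬝ᵥ (M *ᵥ x)
        map_add' := by intros; simp [Matrix.add_mulVec, dotProduct_add]
        map_smul' := by intros; simp [Matrix.smul_mulVec] }
    have hk := key ψ hψ ρ tc htc Φ hΦ hΦd hΦ0 L.toContinuousLinearMap
    have hLform : ∀ s : ℝ, L.toContinuousLinearMap (vecMulVec (ev (ψ s)) (ev (ψ s)))
        = (ev (ψ s) ⬝ᵥ x)^2 := by
      intro s
      simpa [L] using hquad (ev (ψ s)) x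
    -- lower bound on the plain integral from hIE
    have hIEx := hIE.dotProduct_mulVec_nonneg x
    have hI : δ * (x ⬝ᵥ x) ≤ ∫ s in (0:ℝ)..tc, (ev (ψ s) ⬝ᵥ x)^2 := by
      have hswap : L.toContinuousLinearMap (∫ s in (0:ℝ)..tc, vecMulVec (ev (ψ s)) (ev (ψ s)))
          = ∫ s in (0:ℝ)..tc, (ev (ψ s) ⬝ᵥ x)^2 := by
        refine (ContinuousLinearMap.intervalIntegral_comp_comm L.toContinuousLinearMap (hVM.intervalIntegrable 0 tc)).symm.trans ?_
        exact intervalIntegral.integral_congr (fun s _ => hLform s)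
      have h0 : (0:ℝ) ≤ L.toContinuousLinearMap
          ((∫ s in (0:ℝ)..tc, vecMulVec (ev (ψ s)) (ev (ψ s))) - δ • 1) := by
        simpa [L] using hIEx
      rw [map_sub, hswap] at h0
      have : L.toContinuousLinearMap (δ • (1 : Matrix (Fin n) (Fin n) ℝ)) = δ * (x ⬝ᵥ x) := by
        simp [L, Matrix.one_mulVec]
      rw [this] at h0
      linarith
    -- monotone integral: exp(ρ s) ≥ 1 on [0, tc]
    have hmono : ∫ s in (0:ℝ)..tc, (ev (ψ s) ⬝ᵥ x)^2 ≤
        ∫ s in (0:ℝ)..tc, Real.exp (ρ * s) * (ev (ψ s) ⬝ᵥ x)^2 := by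
      apply intervalIntegral.integral_mono_on htc.le
      · exact (((ev_cont.comp hψ).dotProduct continuous_const).pow 2).intervalIntegrable 0 tc
      · exact ((Real.continuous_exp.comp (continuous_const.mul continuous_id)).mul
          (((ev_cont.comp hψ).dotProduct continuous_const).pow 2)).intervalIntegrable 0 tc
      · intro s hs
        have h1 : (1:ℝ) ≤ Real.exp (ρ * s) := by
          rw [Real.one_le_exp_iff]; exact mul_nonneg hρ.le hs.1
        nlinarith [sq_nonneg (ev (ψ s) ⬝ᵥ x)]
    have hkey : δ * (x ⬝ᵥ x) ≤ Real.exp (ρ * tc) * L.toContinuousLinearMap (Φ tc) := by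
      rw [hk]; simp_rw [hLform]
      exact le_trans hI hmono
    have hLval : L.toContinuousLinearMap (Φ tc) = (star x) ⬝ᵥ (Φ tc *ᵥ x) := rfl
    have hfinal : (0:ℝ) ≤ (star x) ⬝ᵥ ((Φ tc - (δ * Real.exp (-ρ * tc)) • 1) *ᵥ x) := by
      have hexp : Real.exp (-ρ * tc) = (Real.exp (ρ * tc))⁻¹ := by
        rw [← Real.exp_neg]; ring_nf
      have hpos := Real.exp_pos (ρ * tc)
      rw [Matrix.sub_mulVec, dotProduct_sub, Matrix.smul_mulVec, Matrix.one_mulVec,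
        dotProduct_smul]
      rw [hLval] at hkey
      rw [hexp, smul_eq_mul]
      have hx : star x = x := by simp
      rw [hx] at hkey ⊢
      rw [sub_nonneg, mul_comm δ, mul_assoc, inv_mul_le_iff₀ hpos]
      linarith [hkey]
    simpa using hfinal
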